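/- Let x = p(q−K)/(q−1). Then the probability of the event Success satisfies ( 1 − p(K−1)/(q−1) )^{K} − x^{K} − K(1−p)·x^{K−1} ≤ P(Success) ≤ 1 − p^{K} − K(1−p)p^{K−1}. -/

import Mathlib

open scoped BigOperators Classical

/-- Number of coordinates of `y` equal to the symbol `a`. -/
def cntY {A : Type*} [DecidableEq A] {K : ℕ} (y : Fin K → A) (a : A) : ℕ :=
  (Finset.univ.filter fun j => y j = a).card

/-- Erasure_A: the coordinates of `y` are pairwise distinct and some coordinate equals `c`. -/
def IsErasureA {A : Type*} {K : ℕ} (c : A) (y : Fin K → A) : Prop :=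
  Function.Injective y ∧ ∃ j, y j = c

/-- Erasure_B: the coordinates of `y` are pairwise distinct and no coordinate equals `c`. -/
def IsErasureB {A : Type*} {K : ℕ} (c : A) (y : Fin K → A) : Prop :=
  Function.Injective y ∧ ∀ j, y j ≠ c

/-- Success: some symbol occurs at least twice, strictly more often than every other symbol,
and that symbol equals `c`. -/
def IsSuccess {A : Type*} [DecidableEq A] {K : ℕ} (c : A) (y : Fin K → A) : Prop :=
  2 ≤ cntY y c ∧ ∀ a, a ≠ c → cntY y a < cntY y c

/-- Error: the complement of Erasure_A ∪ Erasure_B ∪ Success. -/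
def IsError {A : Type*} [DecidableEq A] {K : ℕ} (c : A) (y : Fin K → A) : Prop :=
  ¬(IsErasureA c y ∨ IsErasureB c y ∨ IsSuccess c y)

/-- Probability of the event `E` for a random vector `Y ∈ A^K` with i.i.d. coordinates,
each equal to `c` with probability `1 − p` and equal to each other fixed symbol with
probability `p/(q−1)`. -/
noncomputable def prEvent {A : Type*} [Fintype A] [DecidableEq A] (q K : ℕ) (p : ℝ)
    (c : A) (E : (Fin K → A) → Prop) : ℝ :=
  ∑ y : Fin K → A,
    (∏ j : Fin K, (if y j = c then 1 - p else p / ((q : ℝ) - 1))) *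
      (if E y then 1 else 0)


set_option linter.unusedSectionVars false

-- descFactorial lower bound
lemma myDescFactorial_ge (N k : ℕ) : (N + 1 - k) ^ k ≤ N.descFactorial k := by
  induction k with
  | zero => simp
  | succ k ih =>
    rw [Nat.descFactorial_succ, pow_succ]
    have h1 : N + 1 - (k + 1) = N - k := by omega
    rw [h1, mul_comm (N - k) (N.descFactorial k)]
    exact Nat.mul_le_mul_right _ (le_trans (Nat.pow_le_pow_left (by omega) k) ih)

section Equivs
variable {A : Type*} [Fintype A] [DecidableEq A] {K : ℕ} (c : A) (S : Finset (Fin K))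

noncomputable def fiberEquiv :
    {y : Fin K → A // ∀ j, y j = c ↔ j ∈ S} ≃ ({j : Fin K // j ∉ S} → {a : A // a ≠ c}) where
  toFun y j := ⟨y.1 j.1, fun h => j.2 ((y.2 j.1).mp h)⟩
  invFun z := ⟨fun j => if h : j ∈ S then c else (z ⟨j, h⟩).1, by
    intro j
    constructor
    · intro h
      by_contra hS
      simp only [dif_neg hS] at h
      exact (z ⟨j, hS⟩).2 h
    · intro h; simp only [dif_pos h]⟩
  left_inv y := by
    apply Subtype.ext
    funext j
    by_cases h : j ∈ S
    · simp only [dif_pos h]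
      exact ((y.2 j).mpr h).symm
    · simp only [dif_neg h]
  right_inv z := by
    funext j
    apply Subtype.ext
    simp only [dif_neg j.2]

noncomputable def fiberInjEquiv :
    {y : Fin K → A // (∀ j, y j = c ↔ j ∈ S) ∧ Set.InjOn y {j | j ∉ S}}
      ≃ ({j : Fin K // j ∉ S} ↪ {a : A // a ≠ c}) where
  toFun y := ⟨fun j => ⟨y.1 j.1, fun h => j.2 ((y.2.1 j.1).mp h)⟩, by
    intro j1 j2 h
    exact Subtype.ext (y.2.2 j1.2 j2.2 (congrArg Subtype.val h))⟩
  invFun e := ⟨fun j => if h : j ∈ S then c else (e ⟨j, h⟩).1, by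
    constructor
    · intro j
      constructor
      · intro h
        by_contra hS
        simp only [dif_neg hS] at h
        exact (e ⟨j, hS⟩).2 h
      · intro h; simp only [dif_pos h]
    · intro j1 h1 j2 h2 heq
      simp only [Set.mem_setOf_eq] at h1 h2
      simp only [dif_neg h1, dif_neg h2] at heq
      have := e.injective (Subtype.ext heq)
      exact congrArg Subtype.val this⟩
  left_inv y := by
    apply Subtype.ext
    funext j
    by_cases h : j ∈ S
    · simp only [dif_pos h]
      exact ((y.2.1 j).mpr h).symm
    · simp only [dif_neg h]; rfl
  right_inv e := by
    apply Function.Embedding.ext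
    intro j
    apply Subtype.ext
    simp only [Function.Embedding.coeFn_mk, dif_neg j.2]
    exact dif_neg j.2

lemma card_notmem_sub : Fintype.card {j : Fin K // j ∉ S} = K - S.card := by
  simp [Fintype.card_subtype_compl]

lemma card_ne_sub : Fintype.card {a : A // a ≠ c} = Fintype.card A - 1 := by
  simp [Fintype.card_subtype_compl]


noncomputable def countE (E : (Fin K → A) → Prop) : ℕ :=
  Nat.card {y : Fin K → A // (∀ j, y j = c ↔ j ∈ S) ∧ E y}

lemma cnt_of_fiber' {y : Fin K → A} (hy : ∀ j, y j = c ↔ j ∈ S) : cntY y c = S.card := by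
  unfold cntY
  congr 1
  ext j
  simp [hy j]

lemma count_true : countE c S (fun _ => True) = (Fintype.card A - 1) ^ (K - S.card) := by
  unfold countE
  have e : {y : Fin K → A // (∀ j, y j = c ↔ j ∈ S) ∧ True}
      ≃ ({j : Fin K // j ∉ S} → {a : A // a ≠ c}) :=
    (Equiv.subtypeEquivRight (fun y => by simp)).trans (fiberEquiv c S)
  rw [Nat.card_congr e, Nat.card_eq_fintype_card, Fintype.card_fun,
    card_notmem_sub, card_ne_sub]

lemma count_cnt (m : ℕ) :
    countE c S (fun y => cntY y c = m)
      = if S.card = m then (Fintype.card A - 1) ^ (K - S.card) else 0 := by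
  split_ifs with h
  · rw [← count_true c S]
    unfold countE
    apply Nat.card_congr
    apply Equiv.subtypeEquivRight
    intro y
    constructor
    · rintro ⟨h1, _⟩; exact ⟨h1, trivial⟩
    · rintro ⟨h1, _⟩
      refine ⟨h1, ?_⟩
      show cntY y c = m
      rw [cnt_of_fiber' c S h1]; exact h
  · unfold countE
    have : IsEmpty {y : Fin K → A // (∀ j, y j = c ↔ j ∈ S) ∧ cntY y c = m} := by
      refine ⟨?_⟩
      rintro ⟨y, h1, h2⟩
      exact h (by rw [← cnt_of_fiber' c S h1, h2])
    exact Nat.card_of_isEmpty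

lemma count_elo :
    countE c S (fun y => 2 ≤ cntY y c ∧ Set.InjOn y {j | y j ≠ c})
      = if 2 ≤ S.card then (Fintype.card A - 1).descFactorial (K - S.card) else 0 := by
  split_ifs with h
  · unfold countE
    have e : {y : Fin K → A // (∀ j, y j = c ↔ j ∈ S) ∧
        (2 ≤ cntY y c ∧ Set.InjOn y {j | y j ≠ c})}
        ≃ ({j : Fin K // j ∉ S} ↪ {a : A // a ≠ c}) := by
      refine (Equiv.subtypeEquivRight ?_).trans (fiberInjEquiv c S)
      intro y
      constructor
      · rintro ⟨h1, _, h3⟩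
        refine ⟨h1, ?_⟩
        have hset : {j : Fin K | j ∉ S} = {j | y j ≠ c} := by
          ext j
          simp [h1 j]
        rw [hset]
        exact h3
      · rintro ⟨h1, h3⟩
        refine ⟨h1, by rw [cnt_of_fiber' c S h1]; exact h, ?_⟩
        have hset : {j : Fin K | y j ≠ c} = {j | j ∉ S} := by
          ext j
          simp [h1 j]
        rw [hset]
        exact h3
    rw [Nat.card_congr e, Nat.card_eq_fintype_card, Fintype.card_embedding_eq,
      card_notmem_sub, card_ne_sub]
  · unfold countE
    have : IsEmpty {y : Fin K → A // (∀ j, y j = c ↔ j ∈ S) ∧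
        (2 ≤ cntY y c ∧ Set.InjOn y {j | y j ≠ c})} := by
      refine ⟨?_⟩
      rintro ⟨y, h1, h2, _⟩
      rw [cnt_of_fiber' c S h1] at h2
      exact h h2
    exact Nat.card_of_isEmpty

end Equivs

section Master
variable {A : Type*} [Fintype A] [DecidableEq A] (q : ℕ) {K : ℕ} (p : ℝ) (c : A)

lemma wprod_eq (S : Finset (Fin K)) (y : Fin K → A)
    (hy : (Finset.univ.filter fun j => y j = c) = S) :
    (∏ j : Fin K, (if y j = c then 1 - p else p / ((q : ℝ) - 1)))
      = (1 - p) ^ S.card * (p / ((q : ℝ) - 1)) ^ (K - S.card) := by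
  have hy' : ∀ j, y j = c ↔ j ∈ S := fun j => by rw [← hy]; simp
  rw [← Finset.prod_mul_prod_compl S]
  congr 1
  · rw [Finset.prod_congr rfl fun j hj => if_pos ((hy' j).mpr hj), Finset.prod_const]
  · rw [Finset.prod_congr rfl fun j hj =>
      if_neg (fun hc => (Finset.mem_compl.mp hj) ((hy' j).mp hc)),
      Finset.prod_const, Finset.card_compl, Fintype.card_fin]

lemma prEvent_fiber (E : (Fin K → A) → Prop) :
    prEvent q K p c E = ∑ S : Finset (Fin K),
      (1 - p) ^ S.card * (p / ((q : ℝ) - 1)) ^ (K - S.card) * (countE c S E : ℝ) := by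
  unfold prEvent
  rw [← Finset.sum_fiberwise Finset.univ
    (fun y : Fin K → A => Finset.univ.filter fun j => y j = c)
    (fun y => (∏ j : Fin K, (if y j = c then 1 - p else p / ((q : ℝ) - 1))) *
      (if E y then 1 else 0))]
  apply Finset.sum_congr rfl
  intro S _
  rw [Finset.sum_congr rfl (fun y hy => by
    rw [wprod_eq q p c S y (by simpa using (Finset.mem_filter.mp hy).2)]),
    ← Finset.mul_sum, Finset.sum_boole, Finset.filter_filter]
  congr 1
  have hpred : ∀ y : Fin K → A,
      ((Finset.univ.filter fun j => y j = c) = S ∧ E y)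
        ↔ ((∀ j, y j = c ↔ j ∈ S) ∧ E y) := by
    intro y
    rw [Finset.ext_iff]
    simp
  have hcard : (Finset.univ.filter fun y : Fin K → A =>
      (Finset.univ.filter fun j => y j = c) = S ∧ E y).card
      = countE c S E := by
    rw [Finset.filter_congr (fun y _ => hpred y)]
    unfold countE
    rw [Nat.card_eq_fintype_card, Fintype.card_subtype]
  exact_mod_cast hcard

lemma sum_pow_card (a b : ℝ) :
    ∑ S : Finset (Fin K), a ^ S.card * b ^ (K - S.card) = (a + b) ^ K := by
  have := Fintype.prod_add (fun _ : Fin K => a) (fun _ : Fin K => b)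
  simp only [Finset.prod_const, Finset.card_univ, Fintype.card_fin, Finset.card_compl] at this
  rw [← this]

lemma filter_card_zero :
    (Finset.univ.filter fun S : Finset (Fin K) => S.card = 0) = {∅} := by
  ext S
  simp [Finset.card_eq_zero]

lemma filter_card_one_eq :
    (Finset.univ.filter fun S : Finset (Fin K) => S.card = 1)
      = Finset.univ.image fun j : Fin K => ({j} : Finset (Fin K)) := by
  ext S
  simp [Finset.card_eq_one, eq_comm]

lemma sum_split (f : Finset (Fin K) → ℝ) :
    ∑ S : Finset (Fin K), f S
      = f ∅ + (∑ j : Fin K, f {j})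
        + ∑ S ∈ Finset.univ.filter fun S : Finset (Fin K) => 2 ≤ S.card, f S := by
  rw [← Finset.sum_filter_add_sum_filter_not Finset.univ
    (fun S : Finset (Fin K) => 2 ≤ S.card) f]
  rw [add_comm]
  congr 1
  have hu : (Finset.univ.filter fun S : Finset (Fin K) => ¬ 2 ≤ S.card)
      = (Finset.univ.filter fun S : Finset (Fin K) => S.card = 0)
        ∪ (Finset.univ.filter fun S : Finset (Fin K) => S.card = 1) := by
    ext S
    simp only [Finset.mem_filter, Finset.mem_union, Finset.mem_univ, true_and]
    omega
  rw [hu, Finset.sum_union (by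
    rw [Finset.disjoint_left]
    intro S h1 h2
    simp only [Finset.mem_filter] at h1 h2
    omega)]
  congr 1
  · rw [filter_card_zero, Finset.sum_singleton]
  · rw [filter_card_one_eq, Finset.sum_image (fun i _ j _ h => Finset.singleton_injective h)]

lemma elo_succ (y : Fin K → A) (h1 : 2 ≤ cntY y c) (h2 : Set.InjOn y {j | y j ≠ c}) :
    IsSuccess c y := by
  refine ⟨h1, fun a ha => lt_of_le_of_lt ?_ (lt_of_lt_of_le one_lt_two h1)⟩
  apply Finset.card_le_one.mpr
  intro j1 hj1 j2 hj2
  simp only [Finset.mem_filter, Finset.mem_univ, true_and] at hj1 hj2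
  exact h2 (show y j1 ≠ c by rw [hj1]; exact ha) (show y j2 ≠ c by rw [hj2]; exact ha)
    (hj1.trans hj2.symm)

end Master


/-- With x = p(q−K)/(q−1):
(1 − p(K−1)/(q−1))^K − x^K − K(1−p)x^{K−1} ≤ P(Success) ≤ 1 − p^K − K(1−p)p^{K−1}. -/
theorem stmt7 {A : Type*} [Fintype A] [DecidableEq A] (q K : ℕ)
    (hK : 2 ≤ K) (hq : K < q) (p : ℝ) (hp : p ∈ Set.Ioo (0 : ℝ) 1)
    (hA : Fintype.card A = q) (c : A) :
    (1 - p * ((K : ℝ) - 1) / ((q : ℝ) - 1)) ^ K -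
        (p * ((q : ℝ) - (K : ℝ)) / ((q : ℝ) - 1)) ^ K -
        (K : ℝ) * (1 - p) * (p * ((q : ℝ) - (K : ℝ)) / ((q : ℝ) - 1)) ^ (K - 1) ≤
      prEvent q K p c (IsSuccess c) ∧
    prEvent q K p c (IsSuccess c) ≤
      1 - p ^ K - (K : ℝ) * (1 - p) * p ^ (K - 1) := by
  obtain ⟨hp0, hp1⟩ := hp
  have hq3 : 3 ≤ q := by omega
  have hqR : (1 : ℝ) < (q : ℝ) := by exact_mod_cast (by omega : 1 < q)
  have hq1 : (0 : ℝ) < (q : ℝ) - 1 := by linarith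
  have hr0 : 0 ≤ p / ((q : ℝ) - 1) := le_of_lt (div_pos hp0 hq1)
  have h1p : (0 : ℝ) ≤ 1 - p := by linarith
  have hcard : Fintype.card A - 1 = q - 1 := by rw [hA]
  have hq1c : ((q - 1 : ℕ) : ℝ) = (q : ℝ) - 1 := by
    rw [Nat.cast_sub (by omega : 1 ≤ q)]; norm_num
  have hrq : p / ((q : ℝ) - 1) * ((q - 1 : ℕ) : ℝ) = p := by
    rw [hq1c]; field_simp
  have hterm : ∀ n : ℕ, (p / ((q : ℝ) - 1)) ^ n * (((q - 1) ^ n : ℕ) : ℝ) = p ^ n := by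
    intro n; rw [Nat.cast_pow, ← mul_pow, hrq]
  -- total probability is 1
  have hthis : ∀ S : Finset (Fin K),
      (1 - p) ^ S.card * (p / ((q : ℝ) - 1)) ^ (K - S.card)
        * (((q - 1) ^ (K - S.card) : ℕ) : ℝ)
      = (1 - p) ^ S.card * p ^ (K - S.card) := fun S => by
    rw [mul_assoc, hterm]
  have htot : prEvent q K p c (fun _ => True) = 1 := by
    rw [prEvent_fiber]
    simp only [count_true, hcard]
    simp only [hthis]
    rw [sum_pow_card]
    norm_num
  -- P(cnt = 0) = p ^ K
  have hC0 : prEvent q K p c (fun y => cntY y c = 0) = p ^ K := by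
    rw [prEvent_fiber]
    simp only [count_cnt, hcard, Nat.cast_ite, Nat.cast_zero, mul_ite, mul_zero]
    rw [← Finset.sum_filter, filter_card_zero, Finset.sum_singleton]
    have := hthis (∅ : Finset (Fin K))
    simp only [Finset.card_empty, Nat.sub_zero, pow_zero, one_mul] at this ⊢
    rw [this]
  -- P(cnt = 1) = K (1 - p) p ^ (K - 1)
  have hC1 : prEvent q K p c (fun y => cntY y c = 1) = (K : ℝ) * (1 - p) * p ^ (K - 1) := by
    rw [prEvent_fiber]
    simp only [count_cnt, hcard, Nat.cast_ite, Nat.cast_zero, mul_ite, mul_zero]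
    rw [← Finset.sum_filter, filter_card_one_eq,
      Finset.sum_image (fun i _ j _ h => Finset.singleton_injective h)]
    have hone : ∀ j : Fin K,
        (1 - p) ^ ({j} : Finset (Fin K)).card
          * (p / ((q : ℝ) - 1)) ^ (K - ({j} : Finset (Fin K)).card)
          * (((q - 1) ^ (K - ({j} : Finset (Fin K)).card) : ℕ) : ℝ)
        = (1 - p) * p ^ (K - 1) := fun j => by
      rw [hthis]
      simp
    rw [Finset.sum_congr rfl fun j _ => hone j, Finset.sum_const, Finset.card_univ,
      Fintype.card_fin, nsmul_eq_mul]
    ring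
  -- upper bound
  have hub : prEvent q K p c (IsSuccess c) + prEvent q K p c (fun y => cntY y c = 0)
      + prEvent q K p c (fun y => cntY y c = 1) ≤ prEvent q K p c (fun _ => True) := by
    unfold prEvent
    rw [← Finset.sum_add_distrib, ← Finset.sum_add_distrib]
    apply Finset.sum_le_sum
    intro y _
    have hw : 0 ≤ ∏ j : Fin K, (if y j = c then 1 - p else p / ((q : ℝ) - 1)) :=
      Finset.prod_nonneg (fun j _ => by split_ifs; exacts [h1p, hr0])
    split_ifs with hs h0 h1' hT
    all_goals try (exact absurd trivial ‹¬True›)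
    all_goals try (exfalso; have h2c := hs.1; omega)
    all_goals try (exfalso; omega)
    all_goals linarith [hw]
  refine ⟨?_, by linarith⟩
  -- lower bound
  have hxc : ((q - K : ℕ) : ℝ) = (q : ℝ) - (K : ℝ) := by
    rw [Nat.cast_sub hq.le]
  have hx : p * ((q : ℝ) - (K : ℝ)) / ((q : ℝ) - 1)
      = p / ((q : ℝ) - 1) * ((q - K : ℕ) : ℝ) := by rw [hxc]; ring
  set x := p * ((q : ℝ) - (K : ℝ)) / ((q : ℝ) - 1) with hxdef
  have hx0 : 0 ≤ x := by rw [hx]; positivity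
  have hmono : prEvent q K p c (fun y => 2 ≤ cntY y c ∧ Set.InjOn y {j | y j ≠ c})
      ≤ prEvent q K p c (IsSuccess c) := by
    unfold prEvent
    apply Finset.sum_le_sum
    intro y _
    have hw : 0 ≤ ∏ j : Fin K, (if y j = c then 1 - p else p / ((q : ℝ) - 1)) :=
      Finset.prod_nonneg (fun j _ => by split_ifs; exacts [h1p, hr0])
    apply mul_le_mul_of_nonneg_left _ hw
    split_ifs with h1 h2 <;> try norm_num
    exact absurd (elo_succ c y h1.1 h1.2) h2
  have hElo : ∑ S : Finset (Fin K),
        (if 2 ≤ S.card then (1 - p) ^ S.card * x ^ (K - S.card) else 0)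
      ≤ prEvent q K p c (fun y => 2 ≤ cntY y c ∧ Set.InjOn y {j | y j ≠ c}) := by
    rw [prEvent_fiber]
    simp only [count_elo, hcard, Nat.cast_ite, Nat.cast_zero, mul_ite, mul_zero]
    apply Finset.sum_le_sum
    intro S _
    split_ifs with h2
    · have hD : ((q - K) ^ (K - S.card) : ℕ) ≤ (q - 1).descFactorial (K - S.card) := by
        calc (q - K) ^ (K - S.card) ≤ (q - 1 + 1 - (K - S.card)) ^ (K - S.card) :=
              Nat.pow_le_pow_left (by omega) _
          _ ≤ (q - 1).descFactorial (K - S.card) := myDescFactorial_ge _ _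
      have hxn : x ^ (K - S.card) ≤ (p / ((q : ℝ) - 1)) ^ (K - S.card)
          * (((q - 1).descFactorial (K - S.card) : ℕ) : ℝ) := by
        calc x ^ (K - S.card)
            = (p / ((q : ℝ) - 1)) ^ (K - S.card) * (((q - K : ℕ) : ℝ)) ^ (K - S.card) := by
              rw [hx, mul_pow]
          _ ≤ _ := by
              apply mul_le_mul_of_nonneg_left _ (pow_nonneg hr0 _)
              rw [← Nat.cast_pow]
              exact_mod_cast hD
      rw [mul_assoc]
      exact mul_le_mul_of_nonneg_left hxn (pow_nonneg h1p _)
    · exact le_refl 0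
  have hsplit1 := sum_split (fun S : Finset (Fin K) =>
    if 2 ≤ S.card then (1 - p) ^ S.card * x ^ (K - S.card) else 0)
  have hsplit2 := sum_split (fun S : Finset (Fin K) => (1 - p) ^ S.card * x ^ (K - S.card))
  have hpow := sum_pow_card (K := K) (1 - p) x
  have hfeq : ∑ S ∈ Finset.univ.filter fun S : Finset (Fin K) => 2 ≤ S.card,
      (if 2 ≤ S.card then (1 - p) ^ S.card * x ^ (K - S.card) else 0)
      = ∑ S ∈ Finset.univ.filter fun S : Finset (Fin K) => 2 ≤ S.card,
        (1 - p) ^ S.card * x ^ (K - S.card) :=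
    Finset.sum_congr rfl (fun S hS => if_pos (Finset.mem_filter.mp hS).2)
  have hbase : 1 - p * ((K : ℝ) - 1) / ((q : ℝ) - 1) = (1 - p) + x := by
    rw [hxdef]; field_simp; ring
  rw [hbase]
  have hval : ∑ S : Finset (Fin K),
      (if 2 ≤ S.card then (1 - p) ^ S.card * x ^ (K - S.card) else 0)
      = ((1 - p) + x) ^ K - x ^ K - (K : ℝ) * (1 - p) * x ^ (K - 1) := by
    rw [hsplit1, hfeq]
    simp only [Finset.card_empty, Finset.card_singleton]
    have h1 : ∀ j : Fin K, (if 2 ≤ 1 then (1 - p) ^ 1 * x ^ (K - 1) else 0) = 0 :=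
      fun j => by norm_num
    rw [Finset.sum_congr rfl (fun j _ => h1 j), Finset.sum_const]
    have h2 := hsplit2
    rw [hpow] at h2
    simp only [Finset.card_empty, Finset.card_singleton, pow_zero, one_mul,
      Nat.sub_zero, pow_one, Finset.sum_const, Finset.card_univ, Fintype.card_fin,
      nsmul_eq_mul] at h2
    norm_num
    linarith
  linarith [hmono, hElo, hval.ge]
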